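/- Let f : U → ℝⁿ be C² on open U ⊆ ℝⁿ with the property that A(u) - A(v) is singular for all u, v ∈ U, where A(u) = Df(u). Define b(u) = A(u)·u - f(u). Then for every u ∈ U such that the segment {(1+ε)u : 0 ≤ ε ≤ ε₀} lies in U for some ε₀ > 0, the derivative Db(u) is a limit of the singular matrices (A(u + εu) - A(u))/ε as ε → 0⁺, hence Db(u) is singular. -/

import Mathlib

/-- If `f` is C² on open `U` with `Df(u) - Df(v)` singular for all `u, v ∈ U`, and
`b(u) = Df(u)·u - f(u)`, then at any `u ∈ U` such that the segment `(1+ε)u`,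
`0 ≤ ε ≤ ε₀`, lies in `U`, the derivative `Db(u)` is the limit as `ε → 0⁺` of the
singular matrices `(Df(u + εu) - Df(u))/ε`, hence `Db(u)` is singular. -/
theorem stmt_15 (n : ℕ) (U : Set (Fin n → ℝ)) (hU : IsOpen U)
    (f : (Fin n → ℝ) → (Fin n → ℝ)) (hf : ContDiffOn ℝ 2 f U)
    (hsing : ∀ u ∈ U, ∀ v ∈ U,
      LinearMap.det ((fderiv ℝ f u - fderiv ℝ f v :
        (Fin n → ℝ) →L[ℝ] (Fin n → ℝ)) : (Fin n → ℝ) →ₗ[ℝ] (Fin n → ℝ)) = 0)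
    (b : (Fin n → ℝ) → (Fin n → ℝ)) (hb : ∀ u, b u = fderiv ℝ f u u - f u)
    (u : Fin n → ℝ) (hu : u ∈ U)
    (ε₀ : ℝ) (hε₀ : 0 < ε₀)
    (hseg : ∀ ε : ℝ, 0 ≤ ε → ε ≤ ε₀ → (1 + ε) • u ∈ U) :
    Filter.Tendsto
      (fun ε : ℝ => ε⁻¹ • (fderiv ℝ f (u + ε • u) - fderiv ℝ f u))
      (nhdsWithin 0 (Set.Ioi 0)) (nhds (fderiv ℝ b u)) ∧
    LinearMap.det ((fderiv ℝ b u : (Fin n → ℝ) →L[ℝ] (Fin n → ℝ)) :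
      (Fin n → ℝ) →ₗ[ℝ] (Fin n → ℝ)) = 0 := by
  have hfu : ContDiffAt ℝ 2 f u := hf.contDiffAt (hU.mem_nhds hu)
  have hA : ContDiffAt ℝ 1 (fderiv ℝ f) u := hfu.fderiv_right (by norm_num)
  have hA' : DifferentiableAt ℝ (fderiv ℝ f) u := hA.differentiableAt one_ne_zero
  set A' := fderiv ℝ (fderiv ℝ f) u with hA'def
  have hA'h : HasFDerivAt (fderiv ℝ f) A' u := hA'.hasFDerivAt
  have hfev : ∀ᶠ y in nhds u, HasFDerivAt f (fderiv ℝ f y) y := by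
    filter_upwards [hU.mem_nhds hu] with y hy
    exact ((hf.differentiableOn (by norm_num)).differentiableAt
      (hU.mem_nhds hy)).hasFDerivAt
  have hsymm : ∀ v w, A' v w = A' w v :=
    second_derivative_symmetric_of_eventually hfev hA'h
  -- derivative of b
  have hbe : b = fun x => fderiv ℝ f x x - f x := funext hb
  have hbd : HasFDerivAt b (A' u) u := by
    have h1 : HasFDerivAt (fun x => fderiv ℝ f x x)
        ((fderiv ℝ f u).comp (ContinuousLinearMap.id ℝ (Fin n → ℝ)) + A'.flip u) u :=
      hA'h.clm_apply (hasFDerivAt_id u)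
    have h2 : HasFDerivAt f (fderiv ℝ f u) u := hfev.self_of_nhds
    have h3 := h1.sub h2
    rw [hbe]
    refine h3.congr_fderiv ?_
    ext v
    simp [hsymm u v]
  have hfb : fderiv ℝ b u = A' u := hbd.fderiv
  -- tendsto part
  have hline : HasDerivAt (fun ε : ℝ => u + ε • u) u 0 := by
    have h := ((hasDerivAt_id (0 : ℝ)).smul_const u).const_add u
    simpa using h
  have hcomp : HasDerivAt (fun ε : ℝ => fderiv ℝ f (u + ε • u)) (A' u) 0 := by
    have h0 : u + (0 : ℝ) • u = u := by simp
    have hA'h2 : HasFDerivAt (fderiv ℝ f) A' (u + (0:ℝ) • u) := by rw [h0]; exact hA'h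
    exact hA'h2.comp_hasDerivAt (x := (0 : ℝ)) hline
  have htend : Filter.Tendsto
      (fun ε : ℝ => ε⁻¹ • (fderiv ℝ f (u + ε • u) - fderiv ℝ f u))
      (nhdsWithin 0 (Set.Ioi 0)) (nhds (fderiv ℝ b u)) := by
    rw [hfb]
    have h := hasDerivAt_iff_tendsto_slope.mp hcomp
    have h2 := h.mono_left (nhdsWithin_mono 0 (fun x hx => ne_of_gt hx))
    refine h2.congr (fun ε => ?_)
    simp [slope_def_module]
  refine ⟨htend, ?_⟩
  -- det part
  have hev : ∀ᶠ ε in nhdsWithin (0:ℝ) (Set.Ioi 0),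
      LinearMap.det (((ε⁻¹ • (fderiv ℝ f (u + ε • u) - fderiv ℝ f u) :
        (Fin n → ℝ) →L[ℝ] (Fin n → ℝ))) : (Fin n → ℝ) →ₗ[ℝ] (Fin n → ℝ)) = 0 := by
    filter_upwards [Ioo_mem_nhdsGT_of_mem (Set.left_mem_Ico.mpr hε₀)] with ε hε
    have hmem : u + ε • u ∈ U := by
      have := hseg ε hε.1.le hε.2.le
      rwa [add_smul, one_smul] at this
    have h0 := hsing _ hmem _ hu
    rw [ContinuousLinearMap.coe_smul, LinearMap.det_smul, h0, mul_zero]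
  have hdet := (ContinuousLinearMap.continuous_det.tendsto (fderiv ℝ b u)).comp htend
  have hzero : Filter.Tendsto (fun _ : ℝ => (0:ℝ)) (nhdsWithin 0 (Set.Ioi 0))
      (nhds (LinearMap.det ((fderiv ℝ b u : (Fin n → ℝ) →L[ℝ] (Fin n → ℝ)) :
        (Fin n → ℝ) →ₗ[ℝ] (Fin n → ℝ)))) := by
    refine hdet.congr' ?_
    filter_upwards [hev] with ε hε using hε
  exact tendsto_nhds_unique hzero tendsto_const_nhds
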